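/- Let g : ℝ → ℝ be a nondecreasing function and c > 0. If t · Π({x ∈ ℝ : |g(x) − c x| > t}) → 0 as t → ∞, where Π is the Poisson measure dΠ(x) = dx/(1+x²), then g(x)/x → c as x → +∞ and as x → −∞. -/

import Mathlib

open MeasureTheory Filter Set
open scoped ENNReal NNReal Topology ZeroAtInfty ComplexConjugate

noncomputable section

/-- The Fourier transform of a positive Borel measure on `ℝ`:
`μ̂(x) = ∫ e^{ixt} dμ(t)`. -/
def mFourier (μ : Measure ℝ) (x : ℝ) : ℂ :=
  ∫ t : ℝ, Complex.exp (Complex.I * x * t) ∂μ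

/-- The integral of a complex-valued function against a finite signed measure,
via the Jordan decomposition. -/
def sIntegral (σ : SignedMeasure ℝ) (f : ℝ → ℂ) : ℂ :=
  (∫ t : ℝ, f t ∂σ.toJordanDecomposition.posPart) -
    ∫ t : ℝ, f t ∂σ.toJordanDecomposition.negPart

/-- The Fourier transform of a finite signed measure on `ℝ`. -/
def sFourier (σ : SignedMeasure ℝ) (x : ℝ) : ℂ :=
  sIntegral σ fun t => Complex.exp (Complex.I * x * t)

/-- The topological support of a positive Borel measure on `ℝ`. -/
def msupport (μ : Measure ℝ) : Set ℝ :=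
  {x : ℝ | ∀ U : Set ℝ, IsOpen U → x ∈ U → 0 < μ U}

/-- A subset of `ℝ` is an open interval iff it is open and order-connected. -/
def IsOpenInterval (s : Set ℝ) : Prop := IsOpen s ∧ s.OrdConnected

/-- A set `U ⊆ ℝ` is long if it is the union of a disjoint family of open intervals `I n`
with `∑ (|I n| / (1 + dist(0, I n)))² = ∞`. -/
def IsLong (U : Set ℝ) : Prop :=
  ∃ I : ℕ → Set ℝ, (∀ n, IsOpenInterval (I n)) ∧
    Pairwise (Function.onFun Disjoint I) ∧ (⋃ n, I n) = U ∧
    ∑' n : ℕ, (EMetric.diam (I n) / (1 + EMetric.infEdist (0 : ℝ) (I n))) ^ 2 = ⊤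

/-- A finite positive measure `μ` is `a`-determinate if there is no finite positive
measure `ν ≠ μ` whose Fourier transform agrees with that of `μ` on `[-a, a]`. -/
def IsDeterminate (μ : Measure ℝ) (a : ℝ) : Prop :=
  ∀ ν : Measure ℝ, IsFiniteMeasure ν →
    (∀ x ∈ Set.Icc (-a) a, mFourier ν x = mFourier μ x) → ν = μ

/-- An entire function has exponential type at most `a`. -/
def ExpTypeLE (F : ℂ → ℂ) (a : ℝ) : Prop :=
  ∀ ε > (0 : ℝ), ∃ C : ℝ, ∀ z : ℂ,
    ‖F z‖ ≤ C * Real.exp ((a + ε) * ‖z‖)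

/-- The Cartwright class `C_a`: entire functions of exponential type at most `a` with
`∫ log⁺|F(t)|/(1+t²) dt < ∞` on the real line. -/
def Cartwright (a : ℝ) : Set (ℂ → ℂ) :=
  {F | Differentiable ℂ F ∧ ExpTypeLE F a ∧
    Integrable (fun t : ℝ => max (Real.log (‖F t‖)) 0 / (1 + t ^ 2))}

/-- The Paley–Wiener space `PW_a`: entire functions of exponential type at most `a`
whose restriction to `ℝ` is square integrable. -/
def PaleyWiener (a : ℝ) : Set (ℂ → ℂ) :=
  {F | Differentiable ℂ F ∧ ExpTypeLE F a ∧ MemLp (fun t : ℝ => F t) 2 volume}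

/-- A short partition of `ℝ`: a partition into consecutive intervals
`I n = (t n, t (n+1)]`, `n ∈ ℤ`, with `|I n| → ∞` as `n → ±∞`, which is a short
family of intervals. -/
structure ShortPartition where
  t : ℤ → ℝ
  strictMono : StrictMono t
  tendsto_atTop : Tendsto t atTop atTop
  tendsto_atBot : Tendsto t atBot atBot
  len_atTop : Tendsto (fun n : ℤ => t (n + 1) - t n) atTop atTop
  len_atBot : Tendsto (fun n : ℤ => t (n + 1) - t n) atBot atTop
  short : Summable (fun n : ℤ =>
    ((t (n + 1) - t n) / (1 + Metric.infDist 0 (Set.Ioc (t n) (t (n + 1))))) ^ 2)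

/-- The `n`-th interval of a short partition. -/
def ShortPartition.interval (P : ShortPartition) (n : ℤ) : Set ℝ :=
  Set.Ioc (P.t n) (P.t (n + 1))

/-- The length of the `n`-th interval of a short partition. -/
def ShortPartition.len (P : ShortPartition) (n : ℤ) : ℝ := P.t (n + 1) - P.t n

/-- The number of points of the sequence `lam` lying in the set `s`. -/
def seqCount (lam : ℤ → ℝ) (s : Set ℝ) : ℕ := Nat.card {k : ℤ | lam k ∈ s}

/-- The logarithmic energy `E_I(n_Λ) = ∬_{I×I} log|x-y| dn_Λ(x) dn_Λ(y)` of the counting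
measure of the sequence `lam` on the set `s` (off-diagonal part; recall `log 0 = 0`
in Lean). -/
def seqEnergy (lam : ℤ → ℝ) (s : Set ℝ) : ℝ :=
  ∑' p : {k : ℤ | lam k ∈ s} × {k : ℤ | lam k ∈ s},
    Real.log |lam (p.1 : ℤ) - lam (p.2 : ℤ)|

/-- A discrete bi-infinite increasing sequence of reals (no finite accumulation points). -/
def IsDiscreteSeq (lam : ℤ → ℝ) : Prop :=
  StrictMono lam ∧ Tendsto lam atTop atTop ∧ Tendsto lam atBot atBot

/-- `lam` is regular with density `d`: for some short partition,
`#(Λ ∩ I n) - d·|I n| = o(|I n|)` as `|n| → ∞`. -/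
def IsRegularSeq (lam : ℤ → ℝ) (d : ℝ) : Prop :=
  ∃ P : ShortPartition, Tendsto
    (fun n : ℤ => ((seqCount lam (P.interval n) : ℝ) - d * P.len n) / P.len n)
    cofinite (nhds 0)

/-- `lam` is a `d`-uniform sequence: a discrete increasing sequence, regular with
density `d`, satisfying the energy condition for some short partition. -/
def IsUniformSeq (lam : ℤ → ℝ) (d : ℝ) : Prop :=
  IsDiscreteSeq lam ∧ IsRegularSeq lam d ∧
  ∃ P : ShortPartition, Summable (fun n : ℤ =>
    ((seqCount lam (P.interval n) : ℝ) ^ 2 * max (Real.log (P.len n)) 0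
      - seqEnergy lam (P.interval n)) / (1 + Metric.infDist 0 (P.interval n) ^ 2))

/-- `M_a(A,B)` (spectral gap form): finite signed measures of total variation at most `1`
with spectral gap `[-a,a]`, positive part supported in `A` and negative part in `B`. -/
def GapMeasures (a : ℝ) (A B : Set ℝ) : Set (SignedMeasure ℝ) :=
  {σ | σ.totalVariation Set.univ ≤ 1 ∧ (∀ x ∈ Set.Icc (-a) a, sFourier σ x = 0) ∧
    msupport σ.toJordanDecomposition.posPart ⊆ A ∧
    msupport σ.toJordanDecomposition.negPart ⊆ B}

/-- `M_a(A,B)` (annihilator form): finite signed measures of total variation at most `1`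
annihilating the Paley–Wiener space `PW_a`, positive part supported in `A` and negative
part in `B`. -/
def MaPW (a : ℝ) (A B : Set ℝ) : Set (SignedMeasure ℝ) :=
  {σ | σ.totalVariation Set.univ ≤ 1 ∧
    (∀ F ∈ PaleyWiener a, sIntegral σ (fun t : ℝ => F t) = 0) ∧
    msupport σ.toJordanDecomposition.posPart ⊆ A ∧
    msupport σ.toJordanDecomposition.negPart ⊆ B}

/-- The set of values `|F(x)|` over `F ∈ ℰ` with `‖F‖_{L²(μ)} ≤ 1`; its supremum is the
majorant `m(x)`. -/
def majorantSet (E : Set (ℂ → ℂ)) (μ : Measure ℝ) (x : ℝ) : Set ℝ :=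
  {y : ℝ | ∃ F ∈ E, eLpNorm (fun t : ℝ => F t) 2 μ ≤ 1 ∧ y = ‖F x‖}

/-- The number of sign changes of a signed measure `σ` on `(0, r)`: the minimal degree of
a nonzero real polynomial `p` such that `p·dσ` is a nonnegative measure on `[0, r]`
(`∞` if there is no such polynomial). -/
def signChanges (σ : SignedMeasure ℝ) (r : ℝ) : ℝ≥0∞ :=
  sInf {x : ℝ≥0∞ | ∃ p : Polynomial ℝ, p ≠ 0 ∧ x = (p.natDegree : ℝ≥0∞) ∧
    ∀ S : Set ℝ, MeasurableSet S → S ⊆ Set.Icc 0 r →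
      0 ≤ (∫ t in S, p.eval t ∂σ.toJordanDecomposition.posPart) -
          ∫ t in S, p.eval t ∂σ.toJordanDecomposition.negPart}

/-- The counting function `n_Λ` of a sequence `lam`: `n_Λ(0) = 0`, constant on each
`(λ_n, λ_{n+1}]` and jumping up by one at each `λ_n`. -/
def countFun (lam : ℤ → ℝ) (t : ℝ) : ℝ :=
  (Nat.card {n : ℤ | lam n ∈ Set.Ico 0 t} : ℝ) -
    (Nat.card {n : ℤ | lam n ∈ Set.Ico t 0} : ℝ)


private lemma key_lb (g : ℝ → ℝ) (c t a b c₀ : ℝ) (ht : 0 ≤ t) (hc₀ : 0 ≤ c₀)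
    (hsub : Set.Ioo a b ⊆ {x : ℝ | t < |g x - c * x|})
    (hbound : ∀ y ∈ Set.Ioo a b, c₀ ≤ 1 / (1 + y ^ 2)) :
    ENNReal.ofReal (t * (c₀ * (b - a))) ≤
      ENNReal.ofReal t *
        ∫⁻ x in {x : ℝ | t < |g x - c * x|}, ENNReal.ofReal (1 / (1 + x ^ 2)) := by
  rcases le_or_gt b a with hba | hab
  · have h1 : c₀ * (b - a) ≤ 0 := mul_nonpos_of_nonneg_of_nonpos hc₀ (by linarith)
    have h0 : t * (c₀ * (b - a)) ≤ 0 := mul_nonpos_of_nonneg_of_nonpos ht h1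
    simp [ENNReal.ofReal_eq_zero.mpr h0]
  · have hmono : (∫⁻ x in Set.Ioo a b, ENNReal.ofReal (1 / (1 + x ^ 2))) ≤
        ∫⁻ x in {x : ℝ | t < |g x - c * x|}, ENNReal.ofReal (1 / (1 + x ^ 2)) :=
      lintegral_mono_set hsub
    have hconst : ENNReal.ofReal (c₀ * (b - a)) ≤
        ∫⁻ x in Set.Ioo a b, ENNReal.ofReal (1 / (1 + x ^ 2)) := by
      have h1 : (∫⁻ _ in Set.Ioo a b, ENNReal.ofReal c₀) ≤
          ∫⁻ x in Set.Ioo a b, ENNReal.ofReal (1 / (1 + x ^ 2)) :=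
        setLIntegral_mono' measurableSet_Ioo
          (fun y hy => ENNReal.ofReal_le_ofReal (hbound y hy))
      calc ENNReal.ofReal (c₀ * (b - a))
          = ENNReal.ofReal c₀ * ENNReal.ofReal (b - a) := ENNReal.ofReal_mul hc₀
        _ = ENNReal.ofReal c₀ * volume (Set.Ioo a b) := by rw [Real.volume_Ioo]
        _ = ∫⁻ _ in Set.Ioo a b, ENNReal.ofReal c₀ := (setLIntegral_const _ _).symm
        _ ≤ _ := h1
    calc ENNReal.ofReal (t * (c₀ * (b - a)))
        = ENNReal.ofReal t * ENNReal.ofReal (c₀ * (b - a)) := ENNReal.ofReal_mul ht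
      _ ≤ _ := mul_le_mul_right (hconst.trans hmono) _

set_option maxHeartbeats 800000 in
private lemma evt_atTop (g : ℝ → ℝ) (hg : Monotone g) (c : ℝ) (hc : 0 < c)
    (h : Filter.Tendsto (fun t : ℝ => ENNReal.ofReal t *
        ∫⁻ x in {x : ℝ | t < |g x - c * x|}, ENNReal.ofReal (1 / (1 + x ^ 2)))
      Filter.atTop (nhds 0))
    (ε : ℝ) (hε : 0 < ε) (hεc : ε < c) :
    ∀ᶠ x in atTop, |g x - c * x| < ε * x := by
  set δ := ε / (2 * c) with hδdef
  have hδ0 : 0 < δ := by positivity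
  have hcδ : c * δ = ε / 2 := by rw [hδdef]; field_simp
  have hδ1 : δ < 1 := by rw [hδdef, div_lt_one (by positivity)]; linarith
  clear_value δ
  set K := ε * δ / (4 * (1 + (1 + δ) ^ 2)) with hKdef
  have hK : 0 < K := by positivity
  clear_value K
  have hev := h.eventually_lt_const (show (0 : ℝ≥0∞) < ENNReal.ofReal K by
    simpa using hK)
  rw [eventually_atTop] at hev
  obtain ⟨T, hT⟩ := hev
  filter_upwards [eventually_ge_atTop (1 : ℝ), eventually_ge_atTop (4 * T / ε)]
    with x hx1 hxT
  by_contra hcon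
  push_neg at hcon
  have hx0 : 0 < x := by linarith
  have ht0 : (0 : ℝ) ≤ ε / 4 * x := by positivity
  have htT : T ≤ ε / 4 * x := by
    have h2 := mul_le_mul_of_nonneg_left hxT (show (0:ℝ) ≤ ε / 4 by positivity)
    calc T = ε / 4 * (4 * T / ε) := by field_simp
      _ ≤ ε / 4 * x := h2
  set c₀ := 1 / (1 + ((1 + δ) * x) ^ 2) with hc₀def
  have hc₀ : 0 ≤ c₀ := by positivity
  clear_value c₀
  have hbound : ∀ y : ℝ, 0 < y → y ≤ (1 + δ) * x → c₀ ≤ 1 / (1 + y ^ 2) := by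
    intro y hy0 hy
    rw [hc₀def]
    exact one_div_le_one_div_of_le (by positivity)
      (by nlinarith [mul_self_le_mul_self hy0.le hy])
  have hx2 : 1 ≤ x ^ 2 := by nlinarith
  have hreal : K ≤ ε / 4 * x * (c₀ * (δ * x)) := by
    rw [hKdef, hc₀def, one_div, mul_comm ((1 + ((1 + δ) * x) ^ 2)⁻¹) (δ * x),
      ← div_eq_mul_inv, ← mul_div_assoc,
      div_le_div_iff₀ (by positivity) (by positivity)]
    nlinarith [mul_le_mul_of_nonneg_left hx2 (le_of_lt (mul_pos hε hδ0)),
      mul_pos hε hδ0, sq_nonneg ((1 + δ) * x)]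
  have hlt := hT _ htT
  rcases le_abs.mp hcon with hup | hdown
  · have hsub : Set.Ioo x ((1 + δ) * x) ⊆ {y : ℝ | ε / 4 * x < |g y - c * y|} := by
      intro y hy
      have h1 : g x ≤ g y := hg hy.1.le
      have h2 : c * y < c * ((1 + δ) * x) := by
        have := hy.2; nlinarith
      have h3 : ε / 4 * x < g y - c * y := by nlinarith
      exact lt_of_lt_of_le h3 (le_abs_self _)
    have hkey := key_lb g c (ε / 4 * x) x ((1 + δ) * x) c₀ ht0 hc₀ hsub
      (fun y hy => hbound y (lt_trans hx0 hy.1) hy.2.le)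
    rw [show (1 + δ) * x - x = δ * x by ring] at hkey
    exact absurd ((ENNReal.ofReal_le_ofReal hreal).trans hkey) hlt.not_ge
  · have hsub : Set.Ioo ((1 - δ) * x) x ⊆ {y : ℝ | ε / 4 * x < |g y - c * y|} := by
      intro y hy
      have h1 : g y ≤ g x := hg hy.2.le
      have h2 : c * ((1 - δ) * x) < c * y := by
        have := hy.1; nlinarith
      have h3 : ε / 4 * x < -(g y - c * y) := by nlinarith
      exact lt_of_lt_of_le h3 (neg_le_abs _)
    have hkey := key_lb g c (ε / 4 * x) ((1 - δ) * x) x c₀ ht0 hc₀ hsub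
      (fun y hy => hbound y (lt_of_le_of_lt (by nlinarith : (0:ℝ) ≤ (1 - δ) * x) hy.1)
        (by nlinarith [hy.2] : y ≤ (1 + δ) * x))
    rw [show x - (1 - δ) * x = δ * x by ring] at hkey
    exact absurd ((ENNReal.ofReal_le_ofReal hreal).trans hkey) hlt.not_ge

private lemma lint_neg (s : Set ℝ) :
    (∫⁻ x in (fun x : ℝ => -x) ⁻¹' s, ENNReal.ofReal (1 / (1 + x ^ 2))) =
      ∫⁻ x in s, ENNReal.ofReal (1 / (1 + x ^ 2)) := by
  have hmp : MeasurePreserving (fun x : ℝ => -x) volume volume :=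
    Measure.measurePreserving_neg _
  have := hmp.setLIntegral_comp_preimage_emb (MeasurableEquiv.neg ℝ).measurableEmbedding
    (fun x => ENNReal.ofReal (1 / (1 + x ^ 2))) s
  simpa using this

private lemma evt_atBot (g : ℝ → ℝ) (hg : Monotone g) (c : ℝ) (hc : 0 < c)
    (h : Filter.Tendsto (fun t : ℝ => ENNReal.ofReal t *
        ∫⁻ x in {x : ℝ | t < |g x - c * x|}, ENNReal.ofReal (1 / (1 + x ^ 2)))
      Filter.atTop (nhds 0))
    (ε : ℝ) (hε : 0 < ε) (hεc : ε < c) :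
    ∀ᶠ x in atBot, |g x - c * x| < ε * (-x) := by
  have hG : Monotone (fun y : ℝ => -g (-y)) :=
    fun a b hab => neg_le_neg (hg (neg_le_neg hab))
  have hset : ∀ t : ℝ, {x : ℝ | t < |(fun y : ℝ => -g (-y)) x - c * x|} =
      (fun x : ℝ => -x) ⁻¹' {x : ℝ | t < |g x - c * x|} := by
    intro t
    ext x
    simp only [Set.mem_setOf_eq, Set.mem_preimage]
    rw [show -g (-x) - c * x = -(g (-x) - c * (-x)) by ring, abs_neg]
  have hh : Filter.Tendsto (fun t : ℝ => ENNReal.ofReal t *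
      ∫⁻ x in {x : ℝ | t < |(fun y : ℝ => -g (-y)) x - c * x|},
        ENNReal.ofReal (1 / (1 + x ^ 2)))
      Filter.atTop (nhds 0) := by
    have heq : (fun t : ℝ => ENNReal.ofReal t *
        ∫⁻ x in {x : ℝ | t < |(fun y : ℝ => -g (-y)) x - c * x|},
          ENNReal.ofReal (1 / (1 + x ^ 2))) =
        (fun t : ℝ => ENNReal.ofReal t *
        ∫⁻ x in {x : ℝ | t < |g x - c * x|}, ENNReal.ofReal (1 / (1 + x ^ 2))) := by
      funext t
      rw [hset t, lint_neg]
    rw [heq]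
    exact h
  have hev := evt_atTop (fun y : ℝ => -g (-y)) hG c hc hh ε hε hεc
  have hneg : Tendsto (fun x : ℝ => -x) atBot atTop := tendsto_neg_atBot_atTop
  filter_upwards [hneg.eventually hev] with x hx
  simp only [neg_neg] at hx
  rwa [show -g x - c * -x = -(g x - c * x) by ring, abs_neg] at hx

/-- If `g : ℝ → ℝ` is nondecreasing, `c > 0`, and
`t · Π({x : |g(x) - cx| > t}) → 0` as `t → ∞` for the Poisson measure
`dΠ(x) = dx/(1+x²)`, then `g(x)/x → c` as `x → ±∞`. -/
theorem ratio_tendsto_of_poisson_tail (g : ℝ → ℝ) (hg : Monotone g) (c : ℝ) (hc : 0 < c)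
    (h : Filter.Tendsto (fun t : ℝ => ENNReal.ofReal t *
        ∫⁻ x in {x : ℝ | t < |g x - c * x|}, ENNReal.ofReal (1 / (1 + x ^ 2)))
      Filter.atTop (nhds 0)) :
    Filter.Tendsto (fun x : ℝ => g x / x) Filter.atTop (nhds c) ∧
    Filter.Tendsto (fun x : ℝ => g x / x) Filter.atBot (nhds c) := by
  have hdiv : ∀ y : ℝ, y ≠ 0 → g y / y - c = (g y - c * y) / y := by
    intro y hy
    field_simp
  have hεlem : ∀ r : ℝ, 0 < r → 0 < min (r / 2) (c / 2) ∧ min (r / 2) (c / 2) < c ∧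
      min (r / 2) (c / 2) < r := by
    intro r hr
    exact ⟨lt_min (by linarith) (by linarith),
      lt_of_le_of_lt (min_le_right _ _) (by linarith),
      lt_of_le_of_lt (min_le_left _ _) (by linarith)⟩
  constructor
  · rw [Metric.tendsto_nhds]
    intro r hr
    obtain ⟨hε, hεc, hεr⟩ := hεlem r hr
    filter_upwards [evt_atTop g hg c hc h _ hε hεc, eventually_gt_atTop (0 : ℝ)]
      with x hx hx0
    rw [Real.dist_eq, hdiv x hx0.ne', abs_div, abs_of_pos hx0, div_lt_iff₀ hx0]
    nlinarith
  · rw [Metric.tendsto_nhds]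
    intro r hr
    obtain ⟨hε, hεc, hεr⟩ := hεlem r hr
    filter_upwards [evt_atBot g hg c hc h _ hε hεc, eventually_lt_atBot (0 : ℝ)]
      with x hx hx0
    rw [Real.dist_eq, hdiv x hx0.ne, abs_div, abs_of_neg hx0, div_lt_iff₀ (by linarith : (0:ℝ) < -x)]
    nlinarith

end
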